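/- Fix integers k ≥ 2, m ≥ 1, p ∈ (0,1), D > 0, and set X^max = D and B(r) = −X^max + 2rX^max/(k−1) for r = 0,…,k−1. Let X₁,…,X_n ∈ ℝ^d with ‖X_i‖₂ ≤ D, and X̄ = (1/n)∑X_i. For each client i and coordinate j, independently let U_i(j) = B(r+1) with probability (X_i(j) − B(r))/(B(r+1) − B(r)) and U_i(j) = B(r) otherwise (where r is such that X_i(j) ∈ [B(r), B(r+1)]), let T_i(j) ∼ Bin(m,p) independently, and Y_i(j) = U_i(j) + (2X^max/(k−1))·T_i(j). Let X̂ = (1/n)∑_{i=1}^n (Y_i − 2X^max m p/(k−1)·𝟙). Then E[X̂] = X̄, and E[‖X̂ − X̄‖₂²] ≤ d D²/(n(k−1)²) + (d/n)·4 m p(1−p) D²/(k−1)². -/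

import Mathlib

open MeasureTheory ProbabilityTheory

/-- The probability mass function of the binomial distribution `Bin(N, p)` at `a`. -/
noncomputable def binomPMF (N : ℕ) (p : ℝ) (a : ℕ) : ℝ :=
  (N.choose a : ℝ) * p ^ a * (1 - p) ^ (N - a)

open Finset in
lemma binom_sum (N : ℕ) (p : ℝ) : ∑ a ∈ range (N + 1), binomPMF N p a = 1 := by
  rw [show (1:ℝ) = (p + (1-p))^N by rw [add_sub_cancel]; simp, add_pow]
  refine Finset.sum_congr rfl fun a ha => ?_
  simp [binomPMF]; ring

open Finset in
lemma binom_key (M : ℕ) (p : ℝ) (b : ℕ) :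
    ((b:ℝ)+1) * binomPMF (M+1) p (b+1) = ((M:ℝ)+1) * p * binomPMF M p b := by
  have hc : ((M:ℝ)+1) * (M.choose b : ℝ) = ((M+1).choose (b+1) : ℝ) * ((b:ℝ)+1) := by
    have h := Nat.add_one_mul_choose_eq M b
    have h2 : ((M.succ * M.choose b : ℕ) : ℝ) = (((M+1).choose (b+1) * (b+1) : ℕ) : ℝ) := by
      exact_mod_cast congrArg (Nat.cast : ℕ → ℝ) h
    push_cast at h2
    linarith
  simp only [binomPMF]
  have hsub : M + 1 - (b + 1) = M - b := by omega
  rw [hsub, pow_succ]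
  linear_combination (-(p^b * p * (1-p)^(M-b))) * hc

open Finset in
lemma binom_mean (N : ℕ) (p : ℝ) :
    ∑ a ∈ range (N + 1), (a : ℝ) * binomPMF N p a = N * p := by
  induction N with
  | zero => simp
  | succ M _ =>
    rw [Finset.sum_range_succ']
    push_cast
    calc ∑ b ∈ range (M+1), ((b:ℝ)+1) * binomPMF (M+1) p (b+1) + (0:ℝ) * binomPMF (M+1) p 0
        = ∑ b ∈ range (M+1), ((M:ℝ)+1) * p * binomPMF M p b := by
          rw [zero_mul, add_zero]; exact Finset.sum_congr rfl fun b _ => binom_key M p b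
      _ = ((M:ℝ)+1) * p := by rw [← Finset.mul_sum, binom_sum, mul_one]

open Finset in
lemma binom_fact2 (N : ℕ) (p : ℝ) :
    ∑ a ∈ range (N + 1), (a : ℝ) * ((a:ℝ) - 1) * binomPMF N p a
      = N * ((N:ℝ)-1) * p^2 := by
  induction N with
  | zero => simp
  | succ M _ =>
    rw [Finset.sum_range_succ']
    push_cast
    have step : ∀ b : ℕ, ((b:ℝ)+1) * (((b:ℝ)+1) - 1) * binomPMF (M+1) p (b+1)
        = ((M:ℝ)+1) * p * ((b:ℝ) * binomPMF M p b) := by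
      intro b
      have h := binom_key M p b
      nlinarith [h]
    calc ∑ b ∈ range (M+1), ((b:ℝ)+1) * (((b:ℝ)+1) - 1) * binomPMF (M+1) p (b+1)
          + (0:ℝ) * ((0:ℝ)-1) * binomPMF (M+1) p 0
        = ∑ b ∈ range (M+1), ((M:ℝ)+1) * p * ((b:ℝ) * binomPMF M p b) := by
          rw [zero_mul, zero_mul, add_zero]
          exact Finset.sum_congr rfl fun b _ => step b
      _ = ((M:ℝ)+1) * p * ((M:ℝ) * p) := by rw [← Finset.mul_sum, binom_mean]
      _ = ((M:ℝ)+1) * (((M:ℝ)+1)-1) * p^2 := by ring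

open Finset in
lemma binom_sq (N : ℕ) (p : ℝ) :
    ∑ a ∈ range (N + 1), (a : ℝ)^2 * binomPMF N p a
      = N * p * (1 - p) + ((N:ℝ) * p)^2 := by
  have h1 := binom_mean N p
  have h2 := binom_fact2 N p
  have h3 : ∑ a ∈ range (N + 1), (a : ℝ)^2 * binomPMF N p a
      = ∑ a ∈ range (N + 1), ((a : ℝ) * ((a:ℝ) - 1) * binomPMF N p a
          + (a:ℝ) * binomPMF N p a) := by
    refine Finset.sum_congr rfl fun a _ => by ring
  rw [h3, Finset.sum_add_distrib, h1, h2]; ring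

open Finset in
lemma binom_centered (N : ℕ) (p : ℝ) :
    ∑ a ∈ range (N + 1), ((a:ℝ) - N*p) * binomPMF N p a = 0 := by
  have h3 : ∑ a ∈ range (N + 1), ((a:ℝ) - N*p) * binomPMF N p a
      = ∑ a ∈ range (N + 1), ((a:ℝ) * binomPMF N p a
          - (N*p) * binomPMF N p a) :=
    Finset.sum_congr rfl fun a _ => by ring
  rw [h3, Finset.sum_sub_distrib, binom_mean, ← Finset.mul_sum, binom_sum]; ring

open Finset in
lemma binom_centered_sq (N : ℕ) (p : ℝ) :
    ∑ a ∈ range (N + 1), ((a:ℝ) - N*p)^2 * binomPMF N p a = N * p * (1-p) := by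
  have h3 : ∑ a ∈ range (N + 1), ((a:ℝ) - N*p)^2 * binomPMF N p a
      = ∑ a ∈ range (N + 1), ((a:ℝ)^2 * binomPMF N p a
          - (2*(N*p)) * ((a:ℝ) * binomPMF N p a)
          + ((N*p)^2) * binomPMF N p a) :=
    Finset.sum_congr rfl fun a _ => by ring
  rw [h3, Finset.sum_add_distrib, Finset.sum_sub_distrib, binom_sq,
    ← Finset.mul_sum, binom_mean, ← Finset.mul_sum, binom_sum]
  ring

lemma finval_integrable {Ω : Type} [MeasurableSpace Ω] (μ : Measure Ω) [IsFiniteMeasure μ]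
    (T : Ω → ℕ) (hT : Measurable T) (s : Finset ℕ) (hs : ∀ᵐ ω ∂μ, T ω ∈ s) (h : ℕ → ℝ) :
    Integrable (fun ω => h (T ω)) μ ∧
      ∫ ω, h (T ω) ∂μ = ∑ a ∈ s, h a * (μ {ω | T ω = a}).toReal := by
  classical
  set g : Ω → ℝ := fun ω => ∑ a ∈ s, Set.indicator {ω | T ω = a} (fun _ => h a) ω with hg
  have hmeas : ∀ a : ℕ, MeasurableSet {ω | T ω = a} := fun a =>
    hT (measurableSet_singleton a)
  have heq : (fun ω => h (T ω)) =ᵐ[μ] g := by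
    filter_upwards [hs] with ω hω
    show h (T ω) = ∑ a ∈ s, Set.indicator {ω | T ω = a} (fun _ => h a) ω
    rw [Finset.sum_eq_single_of_mem (T ω) hω]
    · simp [Set.indicator_of_mem, Set.mem_setOf_eq]
    · intro b _ hb
      apply Set.indicator_of_notMem
      simp [Set.mem_setOf_eq]
      omega
  have hintg : ∀ a ∈ s, Integrable (Set.indicator {ω | T ω = a} (fun _ => h a)) μ :=
    fun a _ => (integrable_const (h a)).indicator (hmeas a)
  have hIg : Integrable g μ := integrable_finset_sum s hintg
  have hI : Integrable (fun ω => h (T ω)) μ := hIg.congr heq.symm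
  refine ⟨hI, ?_⟩
  rw [integral_congr_ae heq, hg, integral_finset_sum s hintg]
  refine Finset.sum_congr rfl fun a _ => ?_
  rw [integral_indicator_const _ (hmeas a), smul_eq_mul, mul_comm]
  rfl

/-- MSE of stochastic `k`-level quantization + Binomial noise:
with `X^max = D`, bin levels `B(r) = -D + 2rD/(k-1)`, stochastic quantization
indices `V i j`, binomial noises `T i j ~ Bin(m,p)`, all jointly independent,
the debiased server estimate is unbiased and
`E‖X̂ - X̄‖² ≤ dD²/(n(k-1)²) + (d/n)·4mp(1-p)D²/(k-1)²`. -/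
theorem quantized_binomial_dme_mse
    {Ω : Type} [MeasurableSpace Ω] (μ : Measure Ω) [IsProbabilityMeasure μ]
    (d n k m : ℕ) (hn : 1 ≤ n) (hk : 2 ≤ k) (hm : 1 ≤ m)
    (p D : ℝ) (hp : 0 < p) (hp1 : p < 1) (hD : 0 < D)
    (X : Fin n → Fin d → ℝ) (hX : ∀ i, Real.sqrt (∑ j, (X i j) ^ 2) ≤ D)
    (B : ℕ → ℝ) (hB : ∀ r : ℕ, B r = -D + 2 * r * D / ((k : ℝ) - 1))
    (r : Fin n → Fin d → ℕ)
    (hrk : ∀ i j, r i j + 1 ≤ k - 1)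
    (hrX : ∀ i j, B (r i j) ≤ X i j ∧ X i j ≤ B (r i j + 1))
    (V : Fin n → Fin d → Ω → ℕ) (T : Fin n → Fin d → Ω → ℕ)
    (hmeasV : ∀ i j, Measurable (V i j)) (hmeasT : ∀ i j, Measurable (T i j))
    (hVdist : ∀ i j, (μ {ω | V i j ω = r i j + 1}).toReal
        = (X i j - B (r i j)) / (B (r i j + 1) - B (r i j)))
    (hVsupp : ∀ i j, μ {ω | V i j ω = r i j ∨ V i j ω = r i j + 1} = 1)
    (hTdist : ∀ i j a, (μ {ω | T i j ω = a}).toReal = binomPMF m p a)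
    (hindep : iIndepFun
      (fun idx : (Fin n × Fin d) ⊕ (Fin n × Fin d) =>
        Sum.elim (fun q => V q.1 q.2) (fun q => T q.1 q.2) idx) μ) :
    (∀ j, ∫ ω, (1 / n : ℝ) *
          ∑ i, (B (V i j ω) + 2 * D / ((k : ℝ) - 1) * T i j ω
            - 2 * D * m * p / ((k : ℝ) - 1)) ∂μ
        = (1 / n : ℝ) * ∑ i, X i j)
    ∧ ∫ ω, ∑ j, ((1 / n : ℝ) *
            ∑ i, (B (V i j ω) + 2 * D / ((k : ℝ) - 1) * T i j ω
              - 2 * D * m * p / ((k : ℝ) - 1))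
          - (1 / n : ℝ) * ∑ i, X i j) ^ 2 ∂μ
        ≤ d * D ^ 2 / (n * ((k : ℝ) - 1) ^ 2)
          + (d / n : ℝ) * (4 * m * p * (1 - p) * D ^ 2 / ((k : ℝ) - 1) ^ 2) := by
  classical
  have hk2 : (2:ℝ) ≤ (k:ℝ) := by exact_mod_cast hk
  have hkr : (0:ℝ) < (k:ℝ) - 1 := by linarith
  have hcc : (0:ℝ) < 2 * D / ((k:ℝ) - 1) := by
    apply div_pos (by linarith) hkr
  obtain ⟨cc, hccdef⟩ : ∃ c : ℝ, c = 2 * D / ((k:ℝ) - 1) := ⟨_, rfl⟩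
  rw [← hccdef] at hcc
  have hccne : cc ≠ 0 := ne_of_gt hcc
  have hBgap : ∀ a : ℕ, B (a+1) - B a = cc := by
    intro a
    rw [hB, hB, hccdef]
    push_cast
    ring
  -- quantization probabilities
  obtain ⟨q, hqdef⟩ : ∃ q : Fin n → Fin d → ℝ, q = fun i j => (X i j - B (r i j)) / cc :=
    ⟨_, rfl⟩
  have hqc : ∀ i j, q i j * cc = X i j - B (r i j) := by
    intro i j; rw [hqdef]; field_simp
  have hq0 : ∀ i j, 0 ≤ q i j := by
    intro i j
    simp only [hqdef]
    exact div_nonneg (by linarith [(hrX i j).1]) (le_of_lt hcc)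
  have hq1 : ∀ i j, q i j ≤ 1 := by
    intro i j
    simp only [hqdef]
    rw [div_le_one hcc]
    have := (hrX i j).2
    have h2 := hBgap (r i j)
    linarith
  have hBr1 : ∀ i j, B (r i j + 1) = B (r i j) + cc := fun i j => by
    have := hBgap (r i j); linarith
  -- measures of the V-events
  have hV1 : ∀ i j, (μ {ω | V i j ω = r i j + 1}).toReal = q i j := by
    intro i j
    rw [hVdist i j, hBgap (r i j), hqdef]
  have hV0 : ∀ i j, (μ {ω | V i j ω = r i j}).toReal = 1 - q i j := by
    intro i j
    have hd : Disjoint {ω | V i j ω = r i j} {ω | V i j ω = r i j + 1} := by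
      rw [Set.disjoint_left]
      intro ω h0 h1
      simp only [Set.mem_setOf_eq] at h0 h1
      omega
    have hu : {ω | V i j ω = r i j} ∪ {ω | V i j ω = r i j + 1}
        = {ω | V i j ω = r i j ∨ V i j ω = r i j + 1} := (Set.setOf_or).symm
    have hsum : μ {ω | V i j ω = r i j} + μ {ω | V i j ω = r i j + 1} = 1 := by
      rw [← measure_union hd ((hmeasV i j) (measurableSet_singleton _)), hu, hVsupp]
    have htr : (μ {ω | V i j ω = r i j}).toReal
        + (μ {ω | V i j ω = r i j + 1}).toReal = 1 := by
      rw [← ENNReal.toReal_add (measure_ne_top μ _) (measure_ne_top μ _), hsum]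
      simp
    have := hV1 i j
    linarith
  -- a.e. support facts
  have hVae : ∀ i j, ∀ᵐ ω ∂μ, V i j ω ∈ ({r i j, r i j + 1} : Finset ℕ) := by
    intro i j
    rw [ae_iff]
    have hS : MeasurableSet {ω | V i j ω = r i j ∨ V i j ω = r i j + 1} := by
      rw [Set.setOf_or]
      exact ((hmeasV i j) (measurableSet_singleton _)).union
        ((hmeasV i j) (measurableSet_singleton _))
    have hset : {ω | ¬ (V i j ω ∈ ({r i j, r i j + 1} : Finset ℕ))}
        = {ω | V i j ω = r i j ∨ V i j ω = r i j + 1}ᶜ := by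
      ext ω; simp [Finset.mem_insert, Finset.mem_singleton]
    rw [hset, measure_compl hS (measure_ne_top μ _), hVsupp]
    simp
  have hTae : ∀ i j, ∀ᵐ ω ∂μ, T i j ω ∈ Finset.range (m+1) := by
    intro i j
    have hmeasa : ∀ a : ℕ, MeasurableSet {ω | T i j ω = a} := fun a =>
      (hmeasT i j) (measurableSet_singleton a)
    have hS : {ω | T i j ω ∈ Finset.range (m+1)}
        = ⋃ a ∈ Finset.range (m+1), {ω | T i j ω = a} := by
      ext ω
      simp only [Set.mem_setOf_eq, Set.mem_iUnion, Finset.mem_range]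
      constructor
      · intro h; exact ⟨T i j ω, h, rfl⟩
      · rintro ⟨a, ha, rfl⟩; exact ha
    have hdisj : (↑(Finset.range (m+1)) : Set ℕ).PairwiseDisjoint
        (fun a => {ω | T i j ω = a}) := by
      intro a _ b _ hab
      rw [Function.onFun, Set.disjoint_left]
      intro ω h1 h2
      simp only [Set.mem_setOf_eq] at h1 h2
      omega
    have hμS : μ {ω | T i j ω ∈ Finset.range (m+1)} = 1 := by
      rw [hS, measure_biUnion_finset hdisj (fun a _ => hmeasa a)]
      have htr : (∑ a ∈ Finset.range (m+1), μ {ω | T i j ω = a}).toReal = 1 := by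
        rw [ENNReal.toReal_sum (fun a _ => measure_ne_top μ _)]
        rw [Finset.sum_congr rfl (fun a _ => hTdist i j a)]
        exact binom_sum m p
      have hne : (∑ a ∈ Finset.range (m+1), μ {ω | T i j ω = a}) ≠ ⊤ :=
        (ENNReal.sum_lt_top.mpr (fun a _ => measure_lt_top μ _)).ne
      rw [← ENNReal.ofReal_toReal hne, htr]
      simp
    rw [ae_iff]
    have hset : {ω | ¬ (T i j ω ∈ Finset.range (m+1))}
        = {ω | T i j ω ∈ Finset.range (m+1)}ᶜ := rfl
    have hSm : MeasurableSet {ω | T i j ω ∈ Finset.range (m+1)} := by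
      rw [hS]
      exact (Finset.range (m+1)).measurableSet_biUnion (fun a _ => hmeasa a)
    rw [hset, measure_compl hSm (measure_ne_top μ _), hμS]
    simp
  -- evaluation of expectations of functions of V and T
  have EVfact : ∀ i j (h : ℕ → ℝ), Integrable (fun ω => h (V i j ω)) μ ∧
      ∫ ω, h (V i j ω) ∂μ = h (r i j) * (1 - q i j) + h (r i j + 1) * q i j := by
    intro i j h
    obtain ⟨hI, hval⟩ := finval_integrable μ (V i j) (hmeasV i j)
      ({r i j, r i j + 1} : Finset ℕ) (hVae i j) h
    refine ⟨hI, ?_⟩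
    rw [hval, Finset.sum_pair (by omega : r i j ≠ r i j + 1), hV0 i j, hV1 i j]
  have ETfact : ∀ i j (h : ℕ → ℝ), Integrable (fun ω => h (T i j ω)) μ ∧
      ∫ ω, h (T i j ω) ∂μ = ∑ a ∈ Finset.range (m+1), h a * binomPMF m p a := by
    intro i j h
    obtain ⟨hI, hval⟩ := finval_integrable μ (T i j) (hmeasT i j)
      (Finset.range (m+1)) (hTae i j) h
    refine ⟨hI, ?_⟩
    rw [hval]
    exact Finset.sum_congr rfl fun a _ => by rw [hTdist i j a]
  -- key single-variable expectations
  have hEBV : ∀ i j, ∫ ω, B (V i j ω) ∂μ = X i j := by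
    intro i j
    rw [(EVfact i j B).2, hBr1 i j]
    linear_combination hqc i j
  have hEA : ∀ i j, ∫ ω, (B (V i j ω) - X i j) ∂μ = 0 := by
    intro i j
    rw [(EVfact i j (fun v => B v - X i j)).2, hBr1 i j]
    linear_combination hqc i j
  have hEA2 : ∀ i j, ∫ ω, (B (V i j ω) - X i j)^2 ∂μ = cc^2 * (q i j * (1 - q i j)) := by
    intro i j
    rw [(EVfact i j (fun v => (B v - X i j)^2)).2, hBr1 i j]
    have hBr : B (r i j) = X i j - q i j * cc := by linear_combination hqc i j
    rw [hBr]
    ring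
  have hET : ∀ i j, ∫ ω, ((T i j ω : ℝ)) ∂μ = m * p := by
    intro i j
    rw [(ETfact i j (fun a => (a:ℝ))).2]
    exact binom_mean m p
  have hEBt : ∀ i j, ∫ ω, ((T i j ω : ℝ) - m*p) ∂μ = 0 := by
    intro i j
    rw [(ETfact i j (fun a => (a:ℝ) - m*p)).2]
    exact binom_centered m p
  have hEBt2 : ∀ i j, ∫ ω, ((T i j ω : ℝ) - m*p)^2 ∂μ = m * p * (1-p) := by
    intro i j
    rw [(ETfact i j (fun a => ((a:ℝ) - m*p)^2)).2]
    exact binom_centered_sq m p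
  -- integrability shorthand
  have IA : ∀ i j, Integrable (fun ω => B (V i j ω) - X i j) μ :=
    fun i j => (EVfact i j (fun v => B v - X i j)).1
  have IA2 : ∀ i j, Integrable (fun ω => (B (V i j ω) - X i j)^2) μ :=
    fun i j => (EVfact i j (fun v => (B v - X i j)^2)).1
  have IBt : ∀ i j, Integrable (fun ω => ((T i j ω : ℝ) - m*p)) μ :=
    fun i j => (ETfact i j (fun a => (a:ℝ) - m*p)).1
  have IBt2 : ∀ i j, Integrable (fun ω => ((T i j ω : ℝ) - m*p)^2) μ :=
    fun i j => (ETfact i j (fun a => ((a:ℝ) - m*p)^2)).1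
  -- independence facts
  have hmeasAll : ∀ idx : (Fin n × Fin d) ⊕ (Fin n × Fin d),
      Measurable (Sum.elim (fun q : Fin n × Fin d => V q.1 q.2)
        (fun q : Fin n × Fin d => T q.1 q.2) idx) := by
    rintro (⟨i, j⟩ | ⟨i, j⟩)
    · exact hmeasV i j
    · exact hmeasT i j
  have hVTind : ∀ i j, IndepFun (V i j) (T i j) μ := by
    intro i j
    exact hindep.indepFun (show (Sum.inl (i,j) : (Fin n × Fin d) ⊕ (Fin n × Fin d)) ≠
      Sum.inr (i,j) by simp)
  have hABtind : ∀ i j, IndepFun (fun ω => B (V i j ω) - X i j)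
      (fun ω => ((T i j ω : ℝ) - m*p)) μ := by
    intro i j
    exact (hVTind i j).comp (measurable_of_countable (fun v : ℕ => B v - X i j))
      (measurable_of_countable (fun a : ℕ => (a:ℝ) - m*p))
  -- centered variables W
  obtain ⟨W, hWdef⟩ : ∃ W : Fin d → Fin n → Ω → ℝ,
      W = fun j i ω => (B (V i j ω) - X i j) + cc * ((T i j ω : ℝ) - m*p) := ⟨_, rfl⟩
  have IW : ∀ j i, Integrable (W j i) μ := by
    intro j i
    rw [hWdef]
    exact (IA i j).add ((IBt i j).const_mul cc)
  have hEW : ∀ j i, ∫ ω, W j i ω ∂μ = 0 := by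
    intro j i
    simp only [hWdef]
    rw [integral_add (IA i j) ((IBt i j).const_mul cc), integral_const_mul,
      hEA i j, hEBt i j]
    ring
  -- independence of W's for distinct clients
  have hWind : ∀ j i i', i ≠ i' → IndepFun (W j i) (W j i') μ := by
    intro j i i' hii'
    have hpair : IndepFun (fun ω => (V i j ω, T i j ω))
        (fun ω => (V i' j ω, T i' j ω)) μ := by
      refine hindep.indepFun_prodMk_prodMk hmeasAll
        (Sum.inl (i, j)) (Sum.inr (i, j)) (Sum.inl (i', j)) (Sum.inr (i', j))
        ?_ ?_ ?_ ?_
      · simp [Prod.ext_iff]; intro h; exact absurd h hii'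
      · simp
      · simp
      · simp [Prod.ext_iff]; intro h; exact absurd h hii'
    have h3 := hpair.comp
      (measurable_of_countable (fun pr : ℕ × ℕ => (B pr.1 - X i j) + cc * ((pr.2:ℝ) - m*p)))
      (measurable_of_countable (fun pr : ℕ × ℕ => (B pr.1 - X i' j) + cc * ((pr.2:ℝ) - m*p)))
    rw [hWdef]
    exact h3
  -- integrability of products
  have hcross_int : ∀ i j, Integrable
      (fun ω => (B (V i j ω) - X i j) * ((T i j ω : ℝ) - m*p)) μ := by
    intro i j
    exact (hABtind i j).integrable_mul (IA i j) (IBt i j)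
  have hcross : ∀ i j, ∫ ω, (B (V i j ω) - X i j) * ((T i j ω : ℝ) - m*p) ∂μ = 0 := by
    intro i j
    have h2 := (hABtind i j).integral_fun_mul_eq_mul_integral (IA i j).1 (IBt i j).1
    rw [hEA i j, zero_mul] at h2
    exact h2
  have hWWdiag_rw : ∀ j i, (fun ω => W j i ω * W j i ω)
      = fun ω => (B (V i j ω) - X i j)^2
          + (cc^2 * ((T i j ω : ℝ) - m*p)^2
            + (2*cc) * ((B (V i j ω) - X i j) * ((T i j ω : ℝ) - m*p))) := by
    intro j i
    funext ω
    simp only [hWdef]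
    ring
  have hWWdiag_int : ∀ j i, Integrable (fun ω => W j i ω * W j i ω) μ := by
    intro j i
    rw [hWWdiag_rw j i]
    exact (IA2 i j).add (((IBt2 i j).const_mul _).add ((hcross_int i j).const_mul _))
  have hWW : ∀ j i i', Integrable (fun ω => W j i ω * W j i' ω) μ := by
    intro j i i'
    by_cases hii' : i = i'
    · subst hii'; exact hWWdiag_int j i
    · exact (hWind j i i' hii').integrable_mul (IW j i) (IW j i')
  have hEWWdiag : ∀ j i, ∫ ω, W j i ω * W j i ω ∂μ
      = cc^2 * (q i j * (1 - q i j)) + cc^2 * (m * p * (1-p)) := by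
    intro j i
    have i2 : Integrable (fun ω => cc^2 * ((T i j ω : ℝ) - m*p)^2) μ :=
      (IBt2 i j).const_mul (cc^2)
    have i3 : Integrable
        (fun ω => (2*cc) * ((B (V i j ω) - X i j) * ((T i j ω : ℝ) - m*p))) μ :=
      (hcross_int i j).const_mul (2*cc)
    have i4 : Integrable (fun ω => cc^2 * ((T i j ω : ℝ) - m*p)^2
        + (2*cc) * ((B (V i j ω) - X i j) * ((T i j ω : ℝ) - m*p))) μ := i2.add i3
    rw [hWWdiag_rw j i, integral_add (IA2 i j) i4, integral_add i2 i3,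
      integral_const_mul, integral_const_mul, hEA2 i j, hEBt2 i j, hcross i j]
    ring
  have hEWWoff : ∀ j i i', i ≠ i' → ∫ ω, W j i ω * W j i' ω ∂μ = 0 := by
    intro j i i' hii'
    have h2 := (hWind j i i' hii').integral_fun_mul_eq_mul_integral (IW j i).1 (IW j i').1
    rw [hEW j i, zero_mul] at h2
    exact h2
  have hC0 : ∀ j i, ∫ ω, W j i ω * W j i ω ∂μ
      ≤ cc^2/4 + cc^2 * (m * p * (1-p)) := by
    intro j i
    rw [hEWWdiag j i]
    have h1 := hq0 i j
    have h2 := hq1 i j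
    have hcc2 : (0:ℝ) ≤ cc^2 := sq_nonneg cc
    nlinarith [sq_nonneg (q i j - 1/2)]
  -- Part 1 : unbiasedness
  have IZ : ∀ i j, Integrable (fun ω => B (V i j ω)
      + 2 * D / ((k : ℝ) - 1) * (T i j ω : ℝ) - 2 * D * m * p / ((k : ℝ) - 1)) μ := by
    intro i j
    exact (((EVfact i j B).1.add
      (((ETfact i j (fun a => (a:ℝ))).1).const_mul (2 * D / ((k : ℝ) - 1)))).sub
      (integrable_const _))
  have hEZ : ∀ i j, ∫ ω, (B (V i j ω)
      + 2 * D / ((k : ℝ) - 1) * (T i j ω : ℝ) - 2 * D * m * p / ((k : ℝ) - 1)) ∂μ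
      = X i j := by
    intro i j
    have i2 : Integrable (fun ω => 2 * D / ((k : ℝ) - 1) * (T i j ω : ℝ)) μ :=
      ((ETfact i j (fun a => (a:ℝ))).1).const_mul (2 * D / ((k : ℝ) - 1))
    have i1 : Integrable
        (fun ω => B (V i j ω) + 2 * D / ((k : ℝ) - 1) * (T i j ω : ℝ)) μ :=
      (EVfact i j B).1.add i2
    rw [integral_sub i1 (integrable_const _), integral_add (EVfact i j B).1 i2,
      integral_const_mul, hEBV i j, hET i j, integral_const]
    simp
    ring
  have part1 : ∀ j, ∫ ω, (1 / n : ℝ) *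
      ∑ i, (B (V i j ω) + 2 * D / ((k : ℝ) - 1) * T i j ω
        - 2 * D * m * p / ((k : ℝ) - 1)) ∂μ
      = (1 / n : ℝ) * ∑ i, X i j := by
    intro j
    rw [integral_const_mul, integral_finset_sum Finset.univ (fun i _ => IZ i j)]
    congr 1
    exact Finset.sum_congr rfl fun i _ => hEZ i j
  refine ⟨part1, ?_⟩
  -- Part 2 : MSE bound
  have hptw : ∀ j ω, (1 / n : ℝ) *
      ∑ i, (B (V i j ω) + 2 * D / ((k : ℝ) - 1) * T i j ω
        - 2 * D * m * p / ((k : ℝ) - 1)) - (1 / n : ℝ) * ∑ i, X i j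
      = (1 / n : ℝ) * ∑ i, W j i ω := by
    intro j ω
    rw [← mul_sub, ← Finset.sum_sub_distrib]
    congr 1
    refine Finset.sum_congr rfl fun i _ => ?_
    simp only [hWdef, hccdef]
    ring
  have hGrw : ∀ j, (fun ω => ((1 / n : ℝ) *
      ∑ i, (B (V i j ω) + 2 * D / ((k : ℝ) - 1) * T i j ω
        - 2 * D * m * p / ((k : ℝ) - 1)) - (1 / n : ℝ) * ∑ i, X i j) ^ 2)
      = fun ω => (1 / n : ℝ)^2 * ∑ i, ∑ i', W j i ω * W j i' ω := by
    intro j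
    funext ω
    rw [hptw j ω, mul_pow, sq (∑ i, W j i ω), Finset.sum_mul_sum]
  have hGint : ∀ j, Integrable (fun ω => ((1 / n : ℝ) *
      ∑ i, (B (V i j ω) + 2 * D / ((k : ℝ) - 1) * T i j ω
        - 2 * D * m * p / ((k : ℝ) - 1)) - (1 / n : ℝ) * ∑ i, X i j) ^ 2) μ := by
    intro j
    rw [hGrw j]
    exact (integrable_finset_sum _ (fun i _ =>
      integrable_finset_sum _ (fun i' _ => hWW j i i'))).const_mul _
  rw [integral_finset_sum Finset.univ (fun j _ => hGint j)]
  have hper : ∀ j : Fin d, ∫ ω, ((1 / n : ℝ) *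
      ∑ i, (B (V i j ω) + 2 * D / ((k : ℝ) - 1) * T i j ω
        - 2 * D * m * p / ((k : ℝ) - 1)) - (1 / n : ℝ) * ∑ i, X i j) ^ 2 ∂μ
      ≤ (1 / n : ℝ)^2 * (n * (cc^2/4 + cc^2 * (m * p * (1-p)))) := by
    intro j
    rw [hGrw j, integral_const_mul,
      integral_finset_sum Finset.univ (fun i _ =>
        integrable_finset_sum Finset.univ (fun i' _ => hWW j i i'))]
    have hinner : ∀ i : Fin n, ∑ i' : Fin n, ∫ ω, W j i ω * W j i' ω ∂μ
        = ∫ ω, W j i ω * W j i ω ∂μ := by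
      intro i
      exact Finset.sum_eq_single_of_mem i (Finset.mem_univ i)
        (fun i' _ hne => hEWWoff j i i' (fun h => hne h.symm))
    have hsum1 : ∑ i : Fin n, (∫ ω, ∑ i' : Fin n, W j i ω * W j i' ω ∂μ)
        = ∑ i : Fin n, ∑ i' : Fin n, ∫ ω, W j i ω * W j i' ω ∂μ :=
      Finset.sum_congr rfl fun i _ =>
        integral_finset_sum Finset.univ (fun i' _ => hWW j i i')
    rw [hsum1]
    have hle : ∑ i : Fin n, ∑ i' : Fin n, ∫ ω, W j i ω * W j i' ω ∂μ
        ≤ n * (cc^2/4 + cc^2 * (m * p * (1-p))) := by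
      calc ∑ i : Fin n, ∑ i' : Fin n, ∫ ω, W j i ω * W j i' ω ∂μ
          = ∑ i : Fin n, ∫ ω, W j i ω * W j i ω ∂μ :=
            Finset.sum_congr rfl fun i _ => hinner i
        _ ≤ ∑ _i : Fin n, (cc^2/4 + cc^2 * (m * p * (1-p))) :=
            Finset.sum_le_sum fun i _ => hC0 j i
        _ = n * (cc^2/4 + cc^2 * (m * p * (1-p))) := by
            rw [Finset.sum_const, Finset.card_univ, Fintype.card_fin, nsmul_eq_mul]
    have hnn : (0:ℝ) ≤ (1 / n : ℝ)^2 := sq_nonneg _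
    exact mul_le_mul_of_nonneg_left hle hnn
  calc ∑ j : Fin d, ∫ ω, ((1 / n : ℝ) *
        ∑ i, (B (V i j ω) + 2 * D / ((k : ℝ) - 1) * T i j ω
          - 2 * D * m * p / ((k : ℝ) - 1)) - (1 / n : ℝ) * ∑ i, X i j) ^ 2 ∂μ
      ≤ ∑ _j : Fin d, (1 / n : ℝ)^2 * (n * (cc^2/4 + cc^2 * (m * p * (1-p)))) :=
        Finset.sum_le_sum fun j _ => hper j
    _ = d * ((1 / n : ℝ)^2 * (n * (cc^2/4 + cc^2 * (m * p * (1-p))))) := by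
        rw [Finset.sum_const, Finset.card_univ, Fintype.card_fin, nsmul_eq_mul]
    _ = d * D ^ 2 / (n * ((k : ℝ) - 1) ^ 2)
        + (d / n : ℝ) * (4 * m * p * (1 - p) * D ^ 2 / ((k : ℝ) - 1) ^ 2) := by
        have hn0 : (n:ℝ) ≠ 0 := by
          have : (1:ℝ) ≤ (n:ℝ) := by exact_mod_cast hn
          linarith
        have hkr0 : ((k:ℝ) - 1) ≠ 0 := ne_of_gt hkr
        rw [hccdef]
        field_simp
        ring
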